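/- Let f : ℝⁿ × (−∞, 0] → ℝ satisfy: D_{xᵢ}f is continuous, and |D_{xᵢ}f(x,t)| ≤ C₀ (|x|² − t)^{−(β+1)/2} for (|x|²−t)^{1/2} ≥ C₀, with β ∈ (1,2]. Define v_i(x,t) := ∫_{ℝⁿ×(−∞,0]} Γ(y,−s) D_{xᵢ}f(x−y, t+s) dy ds, where Γ is the heat kernel. Then there is C > 0 depending only on n, C₀, β such that |v_i(x,t)| ≤ C (|x|² − t)^{(1−β)/2} whenever (|x|² − t)^{1/2} ≥ C₀. -/

import Mathlib

open Real MeasureTheory Set Filter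

lemma gauss_val {n : ℕ} {b : ℝ} (hb : 0 < b) :
    ∫ y : EuclideanSpace ℝ (Fin n), rexp (-b * ‖y‖^2) = (π/b)^((n:ℝ)/2) := by
  rw [GaussianFourier.integral_rexp_neg_mul_sq_norm hb, finrank_euclideanSpace_fin]

lemma gauss_int {n : ℕ} {b : ℝ} (hb : 0 < b) :
    Integrable (fun y : EuclideanSpace ℝ (Fin n) => rexp (-b * ‖y‖^2)) := by
  have h := (GaussianFourier.integrable_cexp_neg_mul_sq_norm_add
      (V := EuclideanSpace ℝ (Fin n)) (b := (b:ℂ)) (by simpa using hb) 0 0).norm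
  refine h.congr (Filter.Eventually.of_forall fun y => ?_)
  simp [Complex.norm_exp, ← Complex.ofReal_pow]

lemma intOn_neg {w : ℝ → ℝ} (hwint : IntegrableOn w (Ioi (0:ℝ))) :
    IntegrableOn (fun s : ℝ => w (-s)) (Iio (0:ℝ)) := by
  have A : MeasurableEmbedding fun x : ℝ => -x :=
    (Homeomorph.neg ℝ).isClosedEmbedding.measurableEmbedding
  have h := (MeasurableEmbedding.integrableOn_map_iff A (μ := (volume : Measure ℝ))
    (f := w) (s := Ioi (0:ℝ)))
  rw [Measure.map_neg_eq_self (volume : Measure ℝ)] at h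
  simpa [Function.comp_def, neg_preimage, Set.neg_Ioi] using h.mp hwint

lemma kernel_fubini {n : ℕ} {c : ℝ} (hc : 0 < c) {w : ℝ → ℝ}
    (hw : Measurable w) (hw0 : ∀ σ, 0 < σ → 0 ≤ w σ)
    (hwint : IntegrableOn w (Ioi (0:ℝ))) :
    Integrable (fun p : EuclideanSpace ℝ (Fin n) × ℝ =>
        (4*π*(-p.2))^(-(n:ℝ)/2) * rexp (-‖p.1‖^2 / (c*(-p.2))) * w (-p.2))
      ((volume : Measure (EuclideanSpace ℝ (Fin n))).prod ((volume : Measure ℝ).restrict (Iio 0)))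
    ∧ ∫ p, (4*π*(-p.2))^(-(n:ℝ)/2) * rexp (-‖p.1‖^2 / (c*(-p.2))) * w (-p.2)
        ∂((volume : Measure (EuclideanSpace ℝ (Fin n))).prod ((volume : Measure ℝ).restrict (Iio 0)))
      = (c/4)^((n:ℝ)/2) * ∫ σ in Ioi (0:ℝ), w σ := by
  set E := EuclideanSpace ℝ (Fin n)
  set f : E × ℝ → ℝ := fun p =>
    (4*π*(-p.2))^(-(n:ℝ)/2) * rexp (-‖p.1‖^2 / (c*(-p.2))) * w (-p.2) with hf
  have hmeas : Measurable f := by fun_prop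
  have hslice : ∀ s : ℝ, s < 0 →
      ∫ y : E, f (y, s) = (c/4)^((n:ℝ)/2) * w (-s) := by
    intro s hs
    have hσ : 0 < -s := by linarith
    have hπ : (0:ℝ) < π := pi_pos
    have hb : 0 < 1/(c*(-s)) := by positivity
    have h1 : ∀ y : E, f (y, s) =
        ((4*π*(-s))^(-(n:ℝ)/2) * w (-s)) * rexp (-(1/(c*(-s))) * ‖y‖^2) := by
      intro y; simp only [hf]; ring_nf
    simp only [h1]
    rw [integral_const_mul, gauss_val hb]
    have h2 : π / (1/(c*(-s))) = c*(-s)*π := by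
      field_simp
      try ring
    rw [h2]
    have h3 : (4*π*(-s)) ^ (-(n:ℝ)/2) = ((4*π*(-s)) ^ ((n:ℝ)/2))⁻¹ := by
      rw [neg_div, Real.rpow_neg (by positivity)]
    have hr : (c*(-s)*π)/(4*π*(-s)) = c/4 := by
      rw [div_eq_div_iff (by positivity) (by norm_num)]
      ring
    calc (4*π*(-s)) ^ (-(n:ℝ)/2) * w (-s) * (c*(-s)*π) ^ ((n:ℝ)/2)
        = ((c*(-s)*π) ^ ((n:ℝ)/2) / (4*π*(-s)) ^ ((n:ℝ)/2)) * w (-s) := by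
          rw [h3]; ring
      _ = ((c*(-s)*π)/(4*π*(-s))) ^ ((n:ℝ)/2) * w (-s) := by
          rw [Real.div_rpow (by positivity) (by positivity)]
      _ = (c/4) ^ ((n:ℝ)/2) * w (-s) := by rw [hr]
  have hsliceInt : ∀ s : ℝ, s < 0 → Integrable (fun y : E => f (y, s)) := by
    intro s hs
    have hσ : 0 < -s := by linarith
    have hb : 0 < 1/(c*(-s)) := by positivity
    have h1 : ∀ y : E, f (y, s) =
        ((4*π*(-s))^(-(n:ℝ)/2) * w (-s)) * rexp (-(1/(c*(-s))) * ‖y‖^2) := by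
      intro y; simp only [hf]; ring_nf
    simp only [h1]
    exact (gauss_int hb).const_mul _
  have hf0 : ∀ (y : E) (s : ℝ), s < 0 → 0 ≤ f (y, s) := by
    intro y s hs
    have hσ : 0 < -s := by linarith
    have hw' := hw0 (-s) hσ
    have h1 : (0:ℝ) ≤ (4*π*(-s))^(-(n:ℝ)/2) := Real.rpow_nonneg (by positivity) _
    have h2 : (0:ℝ) < rexp (-‖y‖^2 / (c*(-s))) := Real.exp_pos _
    simp only [hf]
    positivity
  have hwneg : IntegrableOn (fun s : ℝ => (c/4)^((n:ℝ)/2) * w (-s)) (Iio (0:ℝ)) :=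
    (intOn_neg hwint).const_mul _
  have hnormeq : (fun s => ∫ y : E, ‖f (y, s)‖)
      =ᵐ[(volume : Measure ℝ).restrict (Iio 0)]
      (fun s => (c/4)^((n:ℝ)/2) * w (-s)) := by
    filter_upwards [ae_restrict_mem measurableSet_Iio] with s hs
    have hs' : s < 0 := hs
    rw [← hslice s hs']
    exact integral_congr_ae (Eventually.of_forall fun y =>
      (Real.norm_of_nonneg (hf0 y s hs')))
  have hnormint : Integrable (fun s => ∫ y : E, ‖f (y, s)‖)
      ((volume : Measure ℝ).restrict (Iio 0)) := hwneg.congr hnormeq.symm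
  have hInt : Integrable f
      ((volume : Measure E).prod ((volume : Measure ℝ).restrict (Iio 0))) := by
    refine (integrable_prod_iff' (hmeas.aestronglyMeasurable)).2 ⟨?_, hnormint⟩
    filter_upwards [ae_restrict_mem measurableSet_Iio] with s hs
    exact hsliceInt s hs
  refine ⟨hInt, ?_⟩
  rw [integral_prod_symm f hInt]
  have : ∫ s in Iio (0:ℝ), (∫ y : E, f (y, s))
      = ∫ s in Iio (0:ℝ), (c/4)^((n:ℝ)/2) * w (-s) := by
    refine setIntegral_congr_ae measurableSet_Iio ?_
    exact Eventually.of_forall (fun s hs => hslice s hs)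
  rw [this, integral_const_mul]
  congr 1
  rw [← integral_Iic_eq_integral_Iio, integral_comp_neg_Iic]
  norm_num


lemma w_meas {β A K : ℝ} : Measurable (fun σ : ℝ =>
    if A ≤ σ then K * σ ^ (-(β+1)/2) else K * (A/4) ^ (-(β+1)/2)) :=
  Measurable.ite measurableSet_Ici (by fun_prop) (by fun_prop)

lemma w3_meas {β A K M C₀ : ℝ} : Measurable (fun σ : ℝ => if 0 < σ ∧ σ < A then
    (72/A) * ((if σ < C₀^2 then M * σ else 0) + K * σ ^ ((1-β)/2)) else 0) := by
  refine Measurable.ite ?_ ?_ measurable_const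
  · exact (measurableSet_Ioi.inter measurableSet_Iio : MeasurableSet {σ:ℝ | σ ∈ Ioi 0 ∩ Iio A})
  · exact (((Measurable.ite measurableSet_Iio (by fun_prop) (by fun_prop)).add
      (by fun_prop)).const_mul _)

lemma w_integral {β A K : ℝ} (hβ1 : 1 < β) (hA : 0 < A) (hK : 0 < K) :
    IntegrableOn (fun σ : ℝ => if A ≤ σ then K * σ ^ (-(β+1)/2) else K * (A/4) ^ (-(β+1)/2)) (Ioi (0:ℝ))
    ∧ ∫ σ in Ioi (0:ℝ), (if A ≤ σ then K * σ ^ (-(β+1)/2) else K * (A/4) ^ (-(β+1)/2))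
      = K * (A/4) ^ (-(β+1)/2) * A + K * (2/(β-1)) * A ^ ((1-β)/2) := by
  have hexp : -(β+1)/2 < -1 := by linarith
  have hsplit : Ioo (0:ℝ) A ∪ Ici A = Ioi 0 := Ioo_union_Ici_eq_Ioi hA
  have hdisj : Disjoint (Ioo (0:ℝ) A) (Ici A) := by
    rw [Set.disjoint_left]; rintro σ ⟨_, h2⟩ h3; exact absurd h3 (not_le.2 h2)
  set w : ℝ → ℝ := fun σ => if A ≤ σ then K * σ ^ (-(β+1)/2) else K * (A/4) ^ (-(β+1)/2) with hw
  have hwIoo : EqOn w (fun _ => K * (A/4) ^ (-(β+1)/2)) (Ioo 0 A) := by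
    intro σ hσ; simp only [hw, if_neg (not_le.2 hσ.2)]
  have hwIci : EqOn w (fun σ => K * σ ^ (-(β+1)/2)) (Ici A) := by
    intro σ hσ; simp only [hw, if_pos (mem_Ici.1 hσ)]
  have hint1 : IntegrableOn w (Ioo 0 A) := by
    exact (integrableOn_const measure_Ioo_lt_top.ne).congr_fun hwIoo.symm measurableSet_Ioo
  have hint2 : IntegrableOn w (Ici A) := by
    refine (IntegrableOn.congr_fun ?_ hwIci.symm measurableSet_Ici)
    rw [integrableOn_Ici_iff_integrableOn_Ioi]
    exact (integrableOn_Ioi_rpow_of_lt hexp hA).const_mul K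
  constructor
  · rw [← hsplit]; exact hint1.union hint2
  · rw [← hsplit, setIntegral_union hdisj measurableSet_Ici hint1 hint2]
    rw [setIntegral_congr_fun measurableSet_Ioo hwIoo,
        setIntegral_congr_fun measurableSet_Ici hwIci]
    rw [setIntegral_const, integral_Ici_eq_integral_Ioi, integral_const_mul,
        integral_Ioi_rpow_of_lt hexp hA]
    rw [Real.volume_real_Ioo_of_le (by linarith)]
    have : -(β+1)/2 + 1 = (1-β)/2 := by ring
    rw [this]
    have hne : (1-β)/2 ≠ 0 := by intro h; nlinarith
    have hb : β - 1 ≠ 0 := ne_of_gt (by linarith)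
    have key : -A^((1-β)/2)/((1-β)/2) = (2/(β-1))*A^((1-β)/2) := by
      rw [div_eq_iff hne]
      field_simp
      ring
    rw [smul_eq_mul, key]
    ring

lemma w3_integral {β A K M C₀ : ℝ} (hβ1 : 1 < β) (hβ2 : β ≤ 2) (hA : 0 < A) (hK : 0 < K)
    (hM : 0 < M) (hC₀ : 0 < C₀) (hCA : C₀^2 ≤ A) :
    IntegrableOn (fun σ : ℝ => if 0 < σ ∧ σ < A then
        (72/A) * ((if σ < C₀^2 then M * σ else 0) + K * σ ^ ((1-β)/2)) else 0) (Ioi (0:ℝ))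
    ∧ ∫ σ in Ioi (0:ℝ), (if 0 < σ ∧ σ < A then
        (72/A) * ((if σ < C₀^2 then M * σ else 0) + K * σ ^ ((1-β)/2)) else 0)
      = (72/A) * (M * (C₀^2)^2/2 + K * (2/(3-β)) * A ^ ((3-β)/2)) := by
  have hr : (-1:ℝ) < (1-β)/2 := by linarith
  set w3 : ℝ → ℝ := fun σ => if 0 < σ ∧ σ < A then
      (72/A) * ((if σ < C₀^2 then M * σ else 0) + K * σ ^ ((1-β)/2)) else 0 with hw3
  set g : ℝ → ℝ := fun σ => (72/A) * ((if σ < C₀^2 then M * σ else 0) + K * σ ^ ((1-β)/2)) with hg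
  -- w3 agrees with g on Ioo 0 A and vanishes on Ici A
  have hEqOo : EqOn w3 g (Ioo 0 A) := by
    intro σ hσ; simp only [hw3, if_pos (⟨hσ.1, hσ.2⟩ : 0 < σ ∧ σ < A)]; rfl
  have hEqIci : EqOn w3 (fun _ => (0:ℝ)) (Ici A) := by
    intro σ hσ
    simp only [hw3]
    rw [if_neg]
    rintro ⟨-, h2⟩; exact absurd h2 (not_lt.2 hσ)
  -- integrability of g on Ioo 0 A
  have hint_ind : IntegrableOn (fun σ : ℝ => if σ < C₀^2 then M * σ else 0) (Ioo 0 A) := by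
    have h1 : IntegrableOn (fun σ : ℝ => M * σ) (Ioo 0 A) :=
      ((continuous_const.mul continuous_id).integrableOn_Icc).mono_set Ioo_subset_Icc_self
    have : (fun σ : ℝ => if σ < C₀^2 then M * σ else 0)
        = (Iio (C₀^2)).indicator (fun σ => M * σ) := by
      ext σ; simp [Set.indicator_apply, Set.mem_Iio]
    rw [this]
    exact h1.indicator measurableSet_Iio
  have hint_rpow : IntegrableOn (fun σ : ℝ => K * σ ^ ((1-β)/2)) (Ioo 0 A) := by
    have h1 : IntervalIntegrable (fun σ : ℝ => σ ^ ((1-β)/2)) volume 0 A :=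
      intervalIntegral.intervalIntegrable_rpow' hr
    have h2 : IntegrableOn (fun σ : ℝ => σ ^ ((1-β)/2)) (Ioc 0 A) :=
      (intervalIntegrable_iff_integrableOn_Ioc_of_le hA.le).1 h1
    exact (h2.mono_set Ioo_subset_Ioc_self).const_mul K
  have hintg : IntegrableOn g (Ioo 0 A) := ((hint_ind.add hint_rpow).const_mul _)
  have hint1 : IntegrableOn w3 (Ioo 0 A) :=
    hintg.congr_fun hEqOo.symm measurableSet_Ioo
  have hint2 : IntegrableOn w3 (Ici A) :=
    (integrableOn_zero : IntegrableOn (fun _ => (0:ℝ)) (Ici A)).congr_fun hEqIci.symm measurableSet_Ici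
  have hsplit : Ioo (0:ℝ) A ∪ Ici A = Ioi 0 := Ioo_union_Ici_eq_Ioi hA
  have hdisj : Disjoint (Ioo (0:ℝ) A) (Ici A) := by
    rw [Set.disjoint_left]; rintro σ ⟨_, h2⟩ h3; exact absurd h3 (not_le.2 h2)
  constructor
  · rw [← hsplit]; exact hint1.union hint2
  · rw [← hsplit, setIntegral_union hdisj measurableSet_Ici hint1 hint2]
    rw [setIntegral_congr_fun measurableSet_Ioo hEqOo,
        setIntegral_congr_fun measurableSet_Ici hEqIci]
    simp only [integral_const, smul_zero, add_zero, hg]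
    rw [integral_const_mul, integral_add hint_ind hint_rpow]
    have hval1 : ∫ σ in Ioo (0:ℝ) A, (if σ < C₀^2 then M * σ else 0) = M * (C₀^2)^2/2 := by
      have : (fun σ : ℝ => if σ < C₀^2 then M * σ else 0)
          = (Iio (C₀^2)).indicator (fun σ => M * σ) := by
        ext σ; simp [Set.indicator_apply, Set.mem_Iio]
      rw [this, setIntegral_indicator measurableSet_Iio]
      have hs : Ioo (0:ℝ) A ∩ Iio (C₀^2) = Ioo 0 (C₀^2) := by
        ext σ
        simp only [mem_inter_iff, mem_Ioo, mem_Iio]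
        constructor
        · rintro ⟨⟨h1, _⟩, h3⟩; exact ⟨h1, h3⟩
        · rintro ⟨h1, h2⟩; exact ⟨⟨h1, lt_of_lt_of_le h2 hCA⟩, h2⟩
      rw [hs, ← integral_Ioc_eq_integral_Ioo,
        ← intervalIntegral.integral_of_le (by positivity : (0:ℝ) ≤ C₀^2)]
      rw [intervalIntegral.integral_const_mul, integral_id]
      ring
    have hval2 : ∫ σ in Ioo (0:ℝ) A, K * σ ^ ((1-β)/2) = K * ((2/(3-β)) * A ^ ((3-β)/2)) := by
      rw [← integral_Ioc_eq_integral_Ioo, ← intervalIntegral.integral_of_le hA.le]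
      rw [intervalIntegral.integral_const_mul, integral_rpow (Or.inl hr)]
      have h1 : (1-β)/2 + 1 = (3-β)/2 := by ring
      have h2 : (0:ℝ) ^ ((1-β)/2 + 1) = 0 := by
        rw [h1]; exact Real.zero_rpow (by intro h; nlinarith)
      rw [h2, h1]
      have h3 : (3-β)/2 ≠ 0 := by intro h; nlinarith
      field_simp
      ring
    rw [hval1, hval2]
    ring

set_option maxHeartbeats 1000000 in
theorem convolution_gradient_estimate (n : ℕ) (hn : 1 ≤ n) (β C₀ M : ℝ)
    (hβ : 1 < β ∧ β ≤ 2) (hC₀ : 0 < C₀) (hM : 0 < M)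
    (f : EuclideanSpace ℝ (Fin n) → ℝ → ℝ) (i : Fin n)
    (F : EuclideanSpace ℝ (Fin n) → ℝ → ℝ)
    (hF : ∀ x (t : ℝ), t ≤ 0 →
      F x t = fderiv ℝ (fun y => f y t) x (EuclideanSpace.single i 1))
    (hFcont : Continuous (fun p : EuclideanSpace ℝ (Fin n) × ℝ => F p.1 p.2))
    (hFbdd : ∀ x (t : ℝ), t ≤ 0 → |F x t| ≤ M)
    (hFdecay : ∀ x (t : ℝ), t ≤ 0 → C₀ ≤ Real.sqrt (‖x‖ ^ 2 - t) →
      |F x t| ≤ C₀ * (‖x‖ ^ 2 - t) ^ (-(β + 1) / 2)) :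
    ∃ C > 0, ∀ (x : EuclideanSpace ℝ (Fin n)) (t : ℝ), t ≤ 0 →
      C₀ ≤ Real.sqrt (‖x‖ ^ 2 - t) →
      |∫ p in {p : EuclideanSpace ℝ (Fin n) × ℝ | p.2 ≤ 0},
          (4 * Real.pi * (-p.2)) ^ (-(n : ℝ) / 2) * Real.exp (-‖p.1‖ ^ 2 / (4 * (-p.2))) *
            F (x - p.1) (t + p.2)| ≤
        C * (‖x‖ ^ 2 - t) ^ ((1 - β) / 2) := by
  obtain ⟨hβ1, hβ2⟩ := hβ
  have hb1 : (0:ℝ) < β - 1 := by linarith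
  have hb3 : (0:ℝ) < 3 - β := by linarith
  set K : ℝ := C₀ + M * C₀ ^ (β+1) with hKdef
  have hK : 0 < K := by positivity
  -- unified decay estimate with constant K, valid for parabolic norm ≥ C₀/2
  have hKlem : ∀ (z : EuclideanSpace ℝ (Fin n)) (u : ℝ), u ≤ 0 → C₀^2/4 ≤ ‖z‖^2 - u →
      |F z u| ≤ K * (‖z‖^2 - u) ^ (-(β+1)/2) := by
    intro z u hu hQ4
    set Q := ‖z‖^2 - u with hQdef
    have hQpos : 0 < Q := lt_of_lt_of_le (by positivity) hQ4
    have hQr : 0 ≤ Q ^ (-(β+1)/2) := Real.rpow_nonneg hQpos.le _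
    by_cases hc : C₀ ≤ Real.sqrt Q
    · have h1 := hFdecay z u hu hc
      have h2 : 0 < M * C₀ ^ (β+1) := by positivity
      nlinarith
    · push_neg at hc
      have hQlt : Q < C₀^2 := by
        nlinarith [Real.sq_sqrt hQpos.le, Real.sqrt_nonneg Q]
      have h1 : (C₀^2) ^ (-(β+1)/2) ≤ Q ^ (-(β+1)/2) :=
        Real.rpow_le_rpow_of_nonpos hQpos hQlt.le (by linarith)
      have h2 : (C₀^2) ^ (-(β+1)/2) = (C₀ ^ (β+1))⁻¹ := by
        rw [← Real.rpow_natCast C₀ 2, ← Real.rpow_mul hC₀.le, ← Real.rpow_neg hC₀.le]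
        norm_num
        ring_nf
      have h3 := hFbdd z u hu
      have h4 : 0 < C₀ ^ (β+1) := Real.rpow_pos_of_pos hC₀ _
      have h5 : M = M * C₀ ^ (β+1) * (C₀ ^ (β+1))⁻¹ := by field_simp
      have h6 : M * C₀ ^ (β+1) * (C₀^2) ^ (-(β+1)/2) ≤ M * C₀ ^ (β+1) * Q ^ (-(β+1)/2) := by
        have : 0 < M * C₀ ^ (β+1) := by positivity
        nlinarith
      have h7 : 0 ≤ C₀ * Q ^ (-(β+1)/2) := by positivity
      calc |F z u| ≤ M := h3
        _ = M * C₀ ^ (β+1) * (C₀^2) ^ (-(β+1)/2) := by rw [h2]; exact h5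
        _ ≤ M * C₀ ^ (β+1) * Q ^ (-(β+1)/2) := h6
        _ ≤ K * Q ^ (-(β+1)/2) := by rw [hKdef]; nlinarith
  refine ⟨K*(2/(β-1)) + K * (2:ℝ)^(β+1)
    + (2:ℝ)^((n:ℝ)/2) * (36*M*(C₀^2)^2*(C₀^2)^((β-3)/2) + K*(144/(3-β))), ?_, ?_⟩
  · have t1 : 0 < K*(2/(β-1)) := mul_pos hK (div_pos two_pos hb1)
    have t2 : 0 < K*(2:ℝ)^(β+1) := mul_pos hK (Real.rpow_pos_of_pos two_pos _)
    have t3 : 0 < (2:ℝ)^((n:ℝ)/2) * (36*M*(C₀^2)^2*(C₀^2)^((β-3)/2) + K*(144/(3-β))) :=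
      mul_pos (Real.rpow_pos_of_pos two_pos _)
        (add_pos (by positivity) (mul_pos hK (div_pos (by norm_num) hb3)))
    exact add_pos (add_pos t1 t2) t3
  intro x t ht hRC
  set A := ‖x‖^2 - t with hAdef
  have hApos : 0 < A := Real.sqrt_pos.mp (lt_of_lt_of_le hC₀ hRC)
  have hCA : C₀^2 ≤ A := by nlinarith [Real.sq_sqrt hApos.le, Real.sqrt_nonneg A]
  set w : ℝ → ℝ := fun σ => if A ≤ σ then K * σ ^ (-(β+1)/2) else K * (A/4) ^ (-(β+1)/2)
    with hwdef
  set w3 : ℝ → ℝ := fun σ => if 0 < σ ∧ σ < A then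
      (72/A) * ((if σ < C₀^2 then M * σ else 0) + K * σ ^ ((1-β)/2)) else 0 with hw3def
  have hw0 : ∀ σ : ℝ, 0 < σ → 0 ≤ w σ := by
    intro σ hσ
    simp only [hwdef]
    split
    · positivity
    · positivity
  have hw30 : ∀ σ : ℝ, 0 < σ → 0 ≤ w3 σ := by
    intro σ hσ
    simp only [hw3def]
    split
    · have h1 : (0:ℝ) ≤ (if σ < C₀^2 then M * σ else 0) := by
        split
        · positivity
        · exact le_refl 0
      have h2 : (0:ℝ) ≤ K * σ ^ ((1-β)/2) := by positivity
      have h3 : (0:ℝ) ≤ 72/A := by positivity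
      exact mul_nonneg h3 (add_nonneg h1 h2)
    · exact le_refl 0
  -- pointwise bound
  have hpt : ∀ (y : EuclideanSpace ℝ (Fin n)) (s : ℝ), s < 0 →
      ‖(4 * π * (-s)) ^ (-(n : ℝ) / 2) * rexp (-‖y‖ ^ 2 / (4 * (-s))) * F (x - y) (t + s)‖ ≤
      (4 * π * (-s)) ^ (-(n : ℝ) / 2) * rexp (-‖y‖ ^ 2 / (4 * (-s))) * w (-s)
      + (4 * π * (-s)) ^ (-(n : ℝ) / 2) * rexp (-‖y‖ ^ 2 / (8 * (-s))) * w3 (-s) := by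
    intro y s hs
    have hσ : 0 < -s := by linarith
    have hts : t + s ≤ 0 := by linarith
    set σ := -s with hσdef
    set Q := ‖x - y‖^2 - (t+s) with hQdef
    have hxy2 : 0 ≤ ‖x - y‖^2 := by positivity
    have hy2 : 0 ≤ ‖y‖^2 := by positivity
    have hQσ : σ ≤ Q := by simp only [hQdef, hσdef]; linarith
    have hQpos : 0 < Q := lt_of_lt_of_le hσ hQσ
    have hkpre : 0 ≤ (4 * π * σ) ^ (-(n : ℝ) / 2) := Real.rpow_nonneg (by positivity) _
    have hk4 : 0 ≤ (4 * π * σ) ^ (-(n : ℝ) / 2) * rexp (-‖y‖ ^ 2 / (4 * σ)) :=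
      mul_nonneg hkpre (Real.exp_nonneg _)
    have hk8 : 0 ≤ (4 * π * σ) ^ (-(n : ℝ) / 2) * rexp (-‖y‖ ^ 2 / (8 * σ)) :=
      mul_nonneg hkpre (Real.exp_nonneg _)
    rw [Real.norm_eq_abs, abs_mul, abs_of_nonneg hk4]
    have hterm8 : 0 ≤ (4 * π * σ) ^ (-(n : ℝ) / 2) * rexp (-‖y‖ ^ 2 / (8 * σ)) * w3 σ :=
      mul_nonneg hk8 (hw30 σ hσ)
    have hterm4w : 0 ≤ (4 * π * σ) ^ (-(n : ℝ) / 2) * rexp (-‖y‖ ^ 2 / (4 * σ)) * w σ :=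
      mul_nonneg hk4 (hw0 σ hσ)
    rcases le_or_gt A σ with hcase | hcase
    · -- far past: σ ≥ A
      have hwσ : w σ = K * σ ^ (-(β+1)/2) := by simp only [hwdef]; rw [if_pos hcase]
      have hQ4 : C₀^2/4 ≤ Q := by have := sq_nonneg C₀; linarith
      have h1 := hKlem (x - y) (t+s) hts hQ4
      have h2 : Q ^ (-(β+1)/2) ≤ σ ^ (-(β+1)/2) :=
        Real.rpow_le_rpow_of_nonpos hσ hQσ (by linarith)
      have h3 : |F (x - y) (t+s)| ≤ w σ := by
        rw [hwσ]
        calc |F (x - y) (t+s)| ≤ K * Q ^ (-(β+1)/2) := h1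
          _ ≤ K * σ ^ (-(β+1)/2) := mul_le_mul_of_nonneg_left h2 hK.le
      have h4 := mul_le_mul_of_nonneg_left h3 hk4
      linarith
    · rcases le_or_gt (A/4) (‖x - y‖^2 + -t) with hcase2 | hcase2
      · -- spatially far
        have hwσ : w σ = K * (A/4) ^ (-(β+1)/2) := by
          simp only [hwdef]; rw [if_neg (not_le.2 hcase)]
        have hQA : A/4 ≤ Q := by simp only [hQdef]; linarith
        have hQ4 : C₀^2/4 ≤ Q := by linarith
        have h1 := hKlem (x - y) (t+s) hts hQ4
        have h2 : Q ^ (-(β+1)/2) ≤ (A/4) ^ (-(β+1)/2) :=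
          Real.rpow_le_rpow_of_nonpos (by linarith) hQA (by linarith)
        have h3 : |F (x - y) (t+s)| ≤ w σ := by
          rw [hwσ]
          calc |F (x - y) (t+s)| ≤ K * Q ^ (-(β+1)/2) := h1
            _ ≤ K * (A/4) ^ (-(β+1)/2) := mul_le_mul_of_nonneg_left h2 hK.le
        have h4 := mul_le_mul_of_nonneg_left h3 hk4
        linarith
      · -- near region
        have hwσ3 : w3 σ = (72/A) * ((if σ < C₀^2 then M * σ else 0) + K * σ ^ ((1-β)/2)) := by
          simp only [hw3def]; rw [if_pos ⟨hσ, hcase⟩]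
        set D : ℝ := (if σ < C₀^2 then M else 0) + K * σ ^ (-(β+1)/2) with hDdef
        have hD0 : 0 ≤ D := by
          have h1 : (0:ℝ) ≤ (if σ < C₀^2 then M else 0) := by
            split
            · exact hM.le
            · exact le_refl 0
          have h2 : (0:ℝ) ≤ K * σ ^ (-(β+1)/2) := by positivity
          simp only [hDdef]; linarith
        have hFD : |F (x - y) (t+s)| ≤ D := by
          rcases le_or_gt (C₀^2/4) Q with hq | hq
          · have h1 := hKlem (x - y) (t+s) hts hq
            have h2 : Q ^ (-(β+1)/2) ≤ σ ^ (-(β+1)/2) :=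
              Real.rpow_le_rpow_of_nonpos hσ hQσ (by linarith)
            have h3 : K * Q ^ (-(β+1)/2) ≤ K * σ ^ (-(β+1)/2) :=
              mul_le_mul_of_nonneg_left h2 hK.le
            have h4 : (0:ℝ) ≤ (if σ < C₀^2 then M else 0) := by
              split
              · exact hM.le
              · exact le_refl 0
            simp only [hDdef]; linarith
          · have hσC : σ < C₀^2 := by have := sq_nonneg C₀; linarith
            have h1 := hFbdd (x - y) (t+s) hts
            have h2 : (0:ℝ) ≤ K * σ ^ (-(β+1)/2) := by positivity
            simp only [hDdef]
            rw [if_pos hσC]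
            linarith
        -- geometry: ‖y‖² ≥ A/9
        have hgeo : A/9 ≤ ‖y‖^2 := by
          by_contra hcon
          push_neg at hcon
          have htri : ‖x‖ ≤ ‖x - y‖ + ‖y‖ := by
            calc ‖x‖ = ‖(x - y) + y‖ := by rw [sub_add_cancel]
              _ ≤ ‖x - y‖ + ‖y‖ := norm_add_le _ _
          have h1 : ‖x‖^2 = A + t := by rw [hAdef]; ring
          have h2 : ‖x - y‖^2 < A/4 := by linarith
          have h3 : -t < A/4 := by linarith
          nlinarith [sq_nonneg (2*‖x - y‖ - 3*‖y‖), norm_nonneg (x - y), norm_nonneg y,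
            norm_nonneg x]
        -- exponential gain
        have hexp : rexp (-‖y‖^2/(4*σ)) ≤ rexp (-‖y‖^2/(8*σ)) * (72*σ/A) := by
          have e1 : rexp (-‖y‖^2/(4*σ)) = rexp (-‖y‖^2/(8*σ)) * rexp (-‖y‖^2/(8*σ)) := by
            rw [← Real.exp_add]
            congr 1
            field_simp
            ring
          have e2 : rexp (-‖y‖^2/(8*σ)) ≤ rexp (-(A/(72*σ))) := by
            apply Real.exp_le_exp.2
            rw [neg_div, neg_le_neg_iff]
            rw [div_le_div_iff₀ (by positivity) (by positivity)]
            nlinarith [mul_le_mul_of_nonneg_right hgeo hσ.le]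
          have e3 : rexp (-(A/(72*σ))) ≤ 72*σ/A := by
            have hu : 0 < A/(72*σ) := by positivity
            have h4 := Real.add_one_le_exp (A/(72*σ))
            rw [Real.exp_neg]
            have h6 : 72*σ/A = (A/(72*σ))⁻¹ := by field_simp
            rw [h6]
            exact inv_anti₀ hu (by linarith)
          calc rexp (-‖y‖^2/(4*σ)) = rexp (-‖y‖^2/(8*σ)) * rexp (-‖y‖^2/(8*σ)) := e1
            _ ≤ rexp (-‖y‖^2/(8*σ)) * (72*σ/A) :=
                mul_le_mul_of_nonneg_left (e2.trans e3) (Real.exp_nonneg _)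
        have hDw3 : (72*σ/A) * D = w3 σ := by
          rw [hwσ3, hDdef]
          have hrp : σ * (σ ^ (-(β+1)/2)) = σ ^ ((1-β)/2) := by
            rw [show (1-β)/2 = 1 + (-(β+1)/2) by ring, Real.rpow_add hσ, Real.rpow_one]
          split
          · rw [← hrp]; ring
          · rw [← hrp]; ring
        calc (4 * π * σ) ^ (-(n : ℝ) / 2) * rexp (-‖y‖ ^ 2 / (4 * σ)) * |F (x - y) (t + s)|
            ≤ (4 * π * σ) ^ (-(n : ℝ) / 2) * rexp (-‖y‖ ^ 2 / (4 * σ)) * D :=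
              mul_le_mul_of_nonneg_left hFD hk4
          _ ≤ (4 * π * σ) ^ (-(n : ℝ) / 2) * (rexp (-‖y‖ ^ 2 / (8 * σ)) * (72*σ/A)) * D := by
              have h5 : rexp (-‖y‖ ^ 2 / (4 * σ)) ≤ rexp (-‖y‖ ^ 2 / (8 * σ)) * (72*σ/A) := by
                rw [show -‖y‖ ^ 2 / (4 * σ) = -‖y‖^2/(4*σ) by ring,
                    show -‖y‖ ^ 2 / (8 * σ) = -‖y‖^2/(8*σ) by ring]
                exact hexp
              have := mul_le_mul_of_nonneg_right (mul_le_mul_of_nonneg_left h5 hkpre) hD0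
              linarith
          _ = (4 * π * σ) ^ (-(n : ℝ) / 2) * rexp (-‖y‖ ^ 2 / (8 * σ)) * w3 σ := by
              rw [← hDw3]; ring
          _ ≤ (4 * π * σ) ^ (-(n : ℝ) / 2) * rexp (-‖y‖ ^ 2 / (4 * σ)) * w σ
              + (4 * π * σ) ^ (-(n : ℝ) / 2) * rexp (-‖y‖ ^ 2 / (8 * σ)) * w3 σ := by
              linarith
  -- kernel Fubini applications
  obtain ⟨hwint, hwval⟩ := w_integral (A := A) (K := K) hβ1 hApos hK
  obtain ⟨hw3int, hw3val⟩ := w3_integral (A := A) (K := K) (M := M) (C₀ := C₀)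
    hβ1 hβ2 hApos hK hM hC₀ hCA
  have K4 := kernel_fubini (n := n) (c := 4) (w := w) (by norm_num) w_meas hw0 hwint
  have K8 := kernel_fubini (n := n) (c := 8) (w := w3) (by norm_num) w3_meas hw30 hw3int
  have hwval' : ∫ σ in Ioi (0:ℝ), w σ
      = K * (A/4) ^ (-(β+1)/2) * A + K * (2/(β-1)) * A ^ ((1-β)/2) := hwval
  have hw3val' : ∫ σ in Ioi (0:ℝ), w3 σ
      = (72/A) * (M * (C₀^2)^2/2 + K * (2/(3-β)) * A ^ ((3-β)/2)) := hw3val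
  -- measure bookkeeping
  have hset : {p : EuclideanSpace ℝ (Fin n) × ℝ | p.2 ≤ 0}
      = (univ : Set (EuclideanSpace ℝ (Fin n))) ×ˢ Iic (0:ℝ) := by
    ext p; simp [Set.mem_prod]
  have hμ2 : (volume : Measure (EuclideanSpace ℝ (Fin n) × ℝ)).restrict
        ((univ : Set (EuclideanSpace ℝ (Fin n))) ×ˢ Iio (0:ℝ))
      = Measure.prod volume ((volume : Measure ℝ).restrict (Iio 0)) := by
    rw [Measure.volume_eq_prod, ← Measure.prod_restrict, Measure.restrict_univ]
  have hnull : (volume : Measure (EuclideanSpace ℝ (Fin n) × ℝ))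
      ((univ : Set (EuclideanSpace ℝ (Fin n))) ×ˢ ({0} : Set ℝ)) = 0 := by
    rw [Measure.volume_eq_prod, Measure.prod_prod]; simp
  have haeeq : ((univ : Set (EuclideanSpace ℝ (Fin n))) ×ˢ Iic (0:ℝ))
      =ᵐ[volume] ((univ : Set (EuclideanSpace ℝ (Fin n))) ×ˢ Iio (0:ℝ)) := by
    refine (MeasureTheory.ae_eq_set).2 ⟨?_, ?_⟩
    · refine measure_mono_null ?_ hnull
      rintro ⟨a, b⟩ ⟨⟨-, h1⟩, h2⟩
      have hb1' : b ≤ 0 := h1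
      have hb2 : ¬ b < 0 := by
        intro hc; exact h2 ⟨trivial, hc⟩
      exact ⟨trivial, by simpa using le_antisymm hb1' (not_lt.1 hb2)⟩
    · refine measure_mono_null ?_ hnull
      rintro ⟨a, b⟩ ⟨⟨-, h1⟩, h2⟩
      exact absurd ⟨trivial, mem_Iic.2 (le_of_lt (mem_Iio.1 h1))⟩ h2
  have hμ : (volume : Measure (EuclideanSpace ℝ (Fin n) × ℝ)).restrict {p | p.2 ≤ 0}
      = Measure.prod volume ((volume : Measure ℝ).restrict (Iio 0)) := by
    rw [hset, Measure.restrict_congr_set haeeq, hμ2]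
  -- ae bound
  have hbound : ∀ᵐ p ∂(Measure.prod volume ((volume : Measure ℝ).restrict (Iio 0))),
      ‖(4 * π * (-p.2)) ^ (-(n : ℝ) / 2) * rexp (-‖p.1‖ ^ 2 / (4 * (-p.2))) *
          F (x - p.1) (t + p.2)‖ ≤
        (4 * π * (-p.2)) ^ (-(n : ℝ) / 2) * rexp (-‖p.1‖ ^ 2 / (4 * (-p.2))) * w (-p.2)
        + (4 * π * (-p.2)) ^ (-(n : ℝ) / 2) * rexp (-‖p.1‖ ^ 2 / (8 * (-p.2))) * w3 (-p.2) := by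
    rw [← hμ2]
    refine (ae_restrict_iff' (MeasurableSet.univ.prod measurableSet_Iio)).2
      (Eventually.of_forall ?_)
    rintro ⟨y, s⟩ hp
    exact hpt y s hp.2
  have hGint := K4.1.add K8.1
  -- final numeric facts
  set X := A ^ ((1-β)/2) with hXdef
  have hX0 : 0 ≤ X := Real.rpow_nonneg hApos.le _
  have e3' : A ^ ((β-3)/2) * X = A⁻¹ := by
    rw [hXdef, ← Real.rpow_add hApos, show (β-3)/2 + (1-β)/2 = -1 by ring, Real.rpow_neg_one]
  have e2 : A ^ ((3-β)/2) = A * X := by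
    rw [hXdef, show (3-β)/2 = 1 + (1-β)/2 by ring, Real.rpow_add hApos, Real.rpow_one]
  have e1 : (A/4) ^ (-(β+1)/2) * A = (2:ℝ)^(β+1) * X := by
    have h3 : ((2:ℝ)) ^ (((2:ℕ)):ℝ) = 4 := by rw [Real.rpow_natCast]; norm_num
    have h4 : (4:ℝ) ^ (-(β+1)/2) = (2:ℝ) ^ (-(β+1)) := by
      rw [← h3, ← Real.rpow_mul (by norm_num : (0:ℝ) ≤ 2)]
      congr 1
      push_cast
      ring
    rw [Real.div_rpow hApos.le (by norm_num : (0:ℝ) ≤ 4), h4,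
        Real.rpow_neg (by norm_num : (0:ℝ) ≤ 2), div_eq_mul_inv, inv_inv]
    have h5 : A ^ (-(β+1)/2) * A = X := by
      rw [hXdef, show (1-β)/2 = -(β+1)/2 + 1 by ring, Real.rpow_add hApos, Real.rpow_one]
    calc A ^ (-(β+1)/2) * 2^(β+1) * A = (A ^ (-(β+1)/2) * A) * 2^(β+1) := by ring
      _ = 2^(β+1) * X := by rw [h5]; ring
  have g1 : (72/A) * (M * (C₀^2)^2/2) ≤ 36*M*(C₀^2)^2*(C₀^2)^((β-3)/2) * X := by
    have h1 : (72/A) * (M * (C₀^2)^2/2) = 36*M*(C₀^2)^2 * (A ^ ((β-3)/2) * X) := by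
      rw [e3']; field_simp; ring
    have f3 : A ^ ((β-3)/2) ≤ (C₀^2) ^ ((β-3)/2) :=
      Real.rpow_le_rpow_of_nonpos (by positivity) hCA (by linarith)
    have h2 : A ^ ((β-3)/2) * X ≤ (C₀^2) ^ ((β-3)/2) * X := mul_le_mul_of_nonneg_right f3 hX0
    calc (72/A) * (M * (C₀^2)^2/2) = 36*M*(C₀^2)^2 * (A ^ ((β-3)/2) * X) := h1
      _ ≤ 36*M*(C₀^2)^2 * ((C₀^2) ^ ((β-3)/2) * X) :=
          mul_le_mul_of_nonneg_left h2 (by positivity)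
      _ = 36*M*(C₀^2)^2*(C₀^2)^((β-3)/2) * X := by ring
  have g2 : (72/A) * (K * (2/(3-β)) * A ^ ((3-β)/2)) = K * (144/(3-β)) * X := by
    rw [e2]
    field_simp
    ring
  have hpow2 : (0:ℝ) ≤ (2:ℝ) ^ ((n:ℝ)/2) := (Real.rpow_pos_of_pos two_pos _).le
  have h8 := mul_le_mul_of_nonneg_left g1 hpow2
  -- main chain
  calc |∫ p in {p : EuclideanSpace ℝ (Fin n) × ℝ | p.2 ≤ 0},
          (4 * π * (-p.2)) ^ (-(n : ℝ) / 2) * rexp (-‖p.1‖ ^ 2 / (4 * (-p.2))) *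
            F (x - p.1) (t + p.2)|
      = ‖∫ p, (4 * π * (-p.2)) ^ (-(n : ℝ) / 2) * rexp (-‖p.1‖ ^ 2 / (4 * (-p.2))) *
            F (x - p.1) (t + p.2)
          ∂(Measure.prod volume ((volume : Measure ℝ).restrict (Iio 0)))‖ := by
          rw [← Real.norm_eq_abs, hμ]
    _ ≤ ∫ p, ((4 * π * (-p.2)) ^ (-(n : ℝ) / 2) * rexp (-‖p.1‖ ^ 2 / (4 * (-p.2))) * w (-p.2)
          + (4 * π * (-p.2)) ^ (-(n : ℝ) / 2) * rexp (-‖p.1‖ ^ 2 / (8 * (-p.2))) * w3 (-p.2))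
          ∂(Measure.prod volume ((volume : Measure ℝ).restrict (Iio 0))) :=
        norm_integral_le_of_norm_le hGint hbound
    _ = (K * (A/4) ^ (-(β+1)/2) * A + K * (2/(β-1)) * X)
        + (2:ℝ)^((n:ℝ)/2) * ((72/A) * (M * (C₀^2)^2/2 + K * (2/(3-β)) * A ^ ((3-β)/2))) := by
        rw [integral_add K4.1 K8.1, K4.2, K8.2,
          show ((4:ℝ)/4) = 1 by norm_num, show ((8:ℝ)/4) = 2 by norm_num,
          Real.one_rpow, one_mul, hwval', hw3val']
    _ ≤ (K*(2/(β-1)) + K * (2:ℝ)^(β+1)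
        + (2:ℝ)^((n:ℝ)/2) * (36*M*(C₀^2)^2*(C₀^2)^((β-3)/2) + K*(144/(3-β)))) * X := by
        have e1' : K * (A/4) ^ (-(β+1)/2) * A = K * ((2:ℝ)^(β+1) * X) := by
          rw [mul_assoc, e1]
        have h6 : (72/A) * (M * (C₀^2)^2/2 + K * (2/(3-β)) * A ^ ((3-β)/2))
            = (72/A) * (M * (C₀^2)^2/2) + (72/A) * (K * (2/(3-β)) * A ^ ((3-β)/2)) := by ring
        rw [e1', h6, mul_add, g2]
        nlinarith [h8]
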